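/- Let m ≥ 3 be a natural number, let A be a finite set with a strict linear order <, and let B be a weakly (m−1)-wise balanced design over A. Then the independence number of Γ_{B,m} satisfies α(Γ_{B,m}) ≤ |A| + |B|. -/

import Mathlib

open Finset

/-- `B` is a weakly `m`-wise balanced design over the finite set `A`:
every block is a nonempty subset of `A`, every point of `A` lies in at least
one block, and any `m` pairwise distinct points of `A` are contained together
in at most one block. -/
def IsWeaklyBalancedDesign {α : Type*} [DecidableEq α] (m : ℕ)
    (A : Finset α) (B : Finset (Finset α)) : Prop :=
  (∀ C ∈ B, C ⊆ A) ∧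
  (∀ C ∈ B, C.Nonempty) ∧
  (∀ x ∈ A, ∃ C ∈ B, x ∈ C) ∧
  (∀ S : Finset α, S ⊆ A → S.card = m → (B.filter fun C => S ⊆ C).card ≤ 1)

/-- The vertex set of `Γ_{B,m}`: all incidence pairs `(x, C)` with `x ∈ C ∈ B`. -/
def designVerts {α : Type*} [DecidableEq α] (B : Finset (Finset α)) :
    Finset (α × Finset α) :=
  B.biUnion fun C => C.image fun x => (x, C)

/-- The graph `Γ_{B,m}` on incidence pairs: `(x, C₁)` and `(y, C₂)` are adjacent
iff `x < y`, `C₁ ≠ C₂` and `x ∈ C₂`, or symmetrically `y < x`, `C₂ ≠ C₁` and `y ∈ C₁`. -/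
def designGraph {α : Type*} [inst : LinearOrder α] (B : Finset (Finset α)) :
    SimpleGraph (designVerts (α := α) B) where
  Adj u v :=
    (u.val.1 < v.val.1 ∧ u.val.2 ≠ v.val.2 ∧ u.val.1 ∈ v.val.2) ∨
    (v.val.1 < u.val.1 ∧ v.val.2 ≠ u.val.2 ∧ v.val.1 ∈ u.val.2)
  symm := ⟨fun u v h => by tauto⟩
  loopless := ⟨fun u h => by
    rcases h with ⟨h, _, _⟩ | ⟨h, _, _⟩ <;> exact lt_irrefl _ h⟩

/-- The independence number of a graph: the largest size of an independent set of vertices. -/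
noncomputable def indepNum {V : Type*} (G : SimpleGraph V) : ℕ :=
  sSup {n | ∃ s : Finset V, s.card = n ∧ ∀ x ∈ s, ∀ y ∈ s, ¬ G.Adj x y}

lemma mem_designVerts {α : Type*} [DecidableEq α] {B : Finset (Finset α)}
    {p : α × Finset α} (hp : p ∈ designVerts B) : p.2 ∈ B ∧ p.1 ∈ p.2 := by
  simp only [designVerts, Finset.mem_biUnion, Finset.mem_image] at hp
  obtain ⟨C, hC, x, hx, rfl⟩ := hp
  exact ⟨hC, hx⟩

/-- Let `m ≥ 3`, let `A` be a finite set with a strict linear order and let `B` be a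
weakly `(m-1)`-wise balanced design over `A`. Then `α(Γ_{B,m}) ≤ |A| + |B|`. -/
theorem designGraph_indepNum_le {α : Type*} [LinearOrder α] (m : ℕ) (hm : 3 ≤ m)
    (A : Finset α) (B : Finset (Finset α))
    (hB : IsWeaklyBalancedDesign (m - 1) A B) :
    indepNum (designGraph B) ≤ A.card + B.card := by
  classical
  rw [indepNum]
  apply csSup_le'
  rintro n ⟨s, rfl, hs⟩
  have key : s.card ≤ (A.disjSum B).card := by
    apply Finset.card_le_card_of_injOn
      (fun v => if ∀ w ∈ s, w.val.2 = v.val.2 → w.val.1 ≤ v.val.1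
                then Sum.inr v.val.2 else Sum.inl v.val.1)
    · intro v hv
      obtain ⟨hvB, hvC⟩ := mem_designVerts v.2
      by_cases h : ∀ w ∈ s, w.val.2 = v.val.2 → w.val.1 ≤ v.val.1
      · simp only [if_pos h]; exact Finset.inr_mem_disjSum.2 hvB
      · simp only [if_neg h]; exact Finset.inl_mem_disjSum.2 (hB.1 _ hvB hvC)
    · intro u hu v hv huv
      simp only at huv
      by_cases h1 : ∀ w ∈ s, w.val.2 = u.val.2 → w.val.1 ≤ u.val.1 <;>
      by_cases h2 : ∀ w ∈ s, w.val.2 = v.val.2 → w.val.1 ≤ v.val.1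
      · rw [if_pos h1, if_pos h2] at huv
        have hCC : u.val.2 = v.val.2 := by injection huv
        have h12 := h1 v hv hCC.symm
        have h21 := h2 u hu hCC
        exact Subtype.ext (Prod.ext (le_antisymm h21 h12) hCC)
      · rw [if_pos h1, if_neg h2] at huv; exact absurd huv (by simp)
      · rw [if_neg h1, if_pos h2] at huv; exact absurd huv (by simp)
      · rw [if_neg h1, if_neg h2] at huv
        have hxy : u.val.1 = v.val.1 := by injection huv
        by_cases hCC : u.val.2 = v.val.2
        · exact Subtype.ext (Prod.ext hxy hCC)
        · push_neg at h2
          obtain ⟨w, hw, hwC, hwlt⟩ := h2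
          exfalso
          apply hs u hu w hw
          apply Or.inl
          refine ⟨?_, ?_, ?_⟩
          · rw [hxy]; exact hwlt
          · rw [hwC]; exact hCC
          · rw [hwC, hxy]; exact (mem_designVerts v.2).2
  rwa [Finset.card_disjSum] at key
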